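/- For all n ≥ 2, the colon ideal (Iₙ : x₃^{q+m}) is contained in I_{n-1}. -/
import Mathlib

open MvPolynomial

/-- The monomial ideal `J = (x₂², x₂x₃^{q+m}, x₃^{q+m+1})` of `T = k[x₂,x₃]`
(here `X 0 = x₂`, `X 1 = x₃`). -/
noncomputable def Jideal (k : Type*) [Field k] (q m : ℕ) : Ideal (MvPolynomial (Fin 2) k) :=
  Ideal.span {X 0 ^ 2, X 0 * X 1 ^ (q+m), X 1 ^ (q+m+1)}

/-- The monomial ideal `F = (x₃^{2(q+m)+1})` of `T`. -/
noncomputable def Fideal (k : Type*) [Field k] (q m : ℕ) : Ideal (MvPolynomial (Fin 2) k) :=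
  Ideal.span {X 1 ^ (2*(q+m)+1)}

/-- `Iₙ = Σ_{n₁+2n₂=n} F^{n₂} J^{n₁}`. -/
noncomputable def Iideal (k : Type*) [Field k] (q m n : ℕ) : Ideal (MvPolynomial (Fin 2) k) :=
  ⨆ (c : ℕ × ℕ) (_ : c.1 + 2 * c.2 = n), (Fideal k q m) ^ c.2 * (Jideal k q m) ^ c.1

namespace St5

open Pointwise

/-- The exponent pair `x₂^u x₃^v`. -/
noncomputable def P (u v : ℕ) : Fin 2 →₀ ℕ := Finsupp.single 0 u + Finsupp.single 1 v

lemma P_add (u v u' v' : ℕ) : P u v + P u' v' = P (u + u') (v + v') := by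
  unfold P
  rw [Finsupp.single_add, Finsupp.single_add]
  abel

lemma P_apply0 (u v : ℕ) : P u v 0 = u := by
  simp [P, Finsupp.single_apply]

lemma P_apply1 (u v : ℕ) : P u v 1 = v := by
  simp [P, Finsupp.single_apply]

lemma P_le_iff (u v : ℕ) (d : Fin 2 →₀ ℕ) : P u v ≤ d ↔ u ≤ d 0 ∧ v ≤ d 1 := by
  rw [Finsupp.le_def]
  constructor
  · intro h
    exact ⟨by simpa [P_apply0] using h 0, by simpa [P_apply1] using h 1⟩
  · rintro ⟨h0, h1⟩ i
    fin_cases i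
    · simpa [P_apply0] using h0
    · simpa [P_apply1] using h1

/-- Exponents of the generators of `F^{n₂} J^{n₁}`. -/
def E (a n₁ n₂ : ℕ) : Set (Fin 2 →₀ ℕ) :=
  {d | ∃ i₁ i₂ i₃ : ℕ, i₁ + i₂ + i₃ = n₁ ∧
    d = P (2*i₁ + i₂) (a*i₂ + (a+1)*i₃ + (2*a+1)*n₂)}

/-- Exponents of the generators of `Iₙ`. -/
def S (a n : ℕ) : Set (Fin 2 →₀ ℕ) :=
  {d | ∃ i₁ i₂ i₃ n₂ : ℕ, i₁ + i₂ + i₃ + 2*n₂ = n ∧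
    d = P (2*i₁ + i₂) (a*i₂ + (a+1)*i₃ + (2*a+1)*n₂)}

variable {k : Type*} [Field k]

lemma span_monomial_mul (A B : Set (Fin 2 →₀ ℕ)) :
    Ideal.span ((fun d => monomial d (1:k)) '' A) * Ideal.span ((fun d => monomial d (1:k)) '' B)
      = Ideal.span ((fun d => monomial d (1:k)) '' (A + B)) := by
  rw [Ideal.span_mul_span']
  congr 1
  ext x
  simp only [Set.mem_mul, Set.mem_image, Set.mem_add]
  constructor
  · rintro ⟨_, ⟨d, hd, rfl⟩, _, ⟨e, he, rfl⟩, rfl⟩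
    exact ⟨d + e, ⟨d, hd, e, he, rfl⟩, by simp [monomial_mul]⟩
  · rintro ⟨_, ⟨d, hd, e, he, rfl⟩, rfl⟩
    exact ⟨monomial d 1, ⟨d, hd, rfl⟩, monomial e 1, ⟨e, he, rfl⟩, by simp [monomial_mul]⟩

lemma J_eq (q m : ℕ) :
    Jideal k q m = Ideal.span ((fun d => monomial d (1:k)) ''
      ({P 2 0, P 1 (q+m), P 0 (q+m+1)} : Set (Fin 2 →₀ ℕ))) := by
  unfold Jideal
  congr 1
  rw [Set.image_insert_eq, Set.image_insert_eq, Set.image_singleton]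
  have h1 : (X 0 ^ 2 : MvPolynomial (Fin 2) k) = monomial (P 2 0) 1 := by
    simp [P, X_pow_eq_monomial]
  have h2 : (X 0 * X 1 ^ (q+m) : MvPolynomial (Fin 2) k) = monomial (P 1 (q+m)) 1 := by
    rw [← pow_one (X (0 : Fin 2)), X_pow_eq_monomial, X_pow_eq_monomial, monomial_mul, one_mul]
    rfl
  have h3 : (X 1 ^ (q+m+1) : MvPolynomial (Fin 2) k) = monomial (P 0 (q+m+1)) 1 := by
    simp [P, X_pow_eq_monomial]
  rw [h1, h2, h3]

lemma E_step (a n : ℕ) :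
    E a n 0 + ({P 2 0, P 1 a, P 0 (a+1)} : Set (Fin 2 →₀ ℕ)) = E a (n+1) 0 := by
  ext d
  simp only [Set.mem_add, Set.mem_insert_iff, Set.mem_singleton_iff, E, Set.mem_setOf_eq]
  constructor
  · rintro ⟨t, ⟨i₁, i₂, i₃, hs, rfl⟩, g, hg, rfl⟩
    rcases hg with rfl | rfl | rfl
    · exact ⟨i₁ + 1, i₂, i₃, by omega, by rw [P_add]; congr 1 <;> ring⟩
    · exact ⟨i₁, i₂ + 1, i₃, by omega, by rw [P_add]; congr 1 <;> ring⟩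
    · exact ⟨i₁, i₂, i₃ + 1, by omega, by rw [P_add]; congr 1 <;> ring⟩
  · rintro ⟨i₁, i₂, i₃, hs, rfl⟩
    rcases i₃ with _ | i₃
    · rcases i₂ with _ | i₂
      · rcases i₁ with _ | i₁
        · omega
        · refine ⟨_, ⟨i₁, 0, 0, by omega, rfl⟩, P 2 0, Or.inl rfl, ?_⟩
          rw [P_add]; congr 1 <;> ring
      · refine ⟨_, ⟨i₁, i₂, 0, by omega, rfl⟩, P 1 a, Or.inr (Or.inl rfl), ?_⟩
        rw [P_add]; congr 1 <;> ring
    · refine ⟨_, ⟨i₁, i₂, i₃, by omega, rfl⟩, P 0 (a+1), Or.inr (Or.inr rfl), ?_⟩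
      rw [P_add]; congr 1 <;> ring

lemma J_pow (q m : ℕ) (n₁ : ℕ) :
    (Jideal k q m) ^ n₁ = Ideal.span ((fun d => monomial d (1:k)) '' E (q+m) n₁ 0) := by
  induction n₁ with
  | zero =>
    rw [pow_zero]
    have hE : E (q+m) 0 0 = {P 0 0} := by
      ext d
      simp only [E, Set.mem_setOf_eq, Set.mem_singleton_iff]
      constructor
      · rintro ⟨i₁, i₂, i₃, hs, rfl⟩
        have h1 : i₁ = 0 := by omega
        have h2 : i₂ = 0 := by omega
        have h3 : i₃ = 0 := by omega
        subst h1; subst h2; subst h3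
        congr 1 <;> ring
      · rintro rfl
        exact ⟨0, 0, 0, by omega, by congr 1 <;> ring⟩
    rw [hE, Set.image_singleton]
    have : (monomial (P 0 0) (1:k)) = 1 := by
      simp [P]
    rw [this, Ideal.span_singleton_one, Ideal.one_eq_top]
  | succ n ih =>
    rw [pow_succ, ih, J_eq q m, span_monomial_mul, E_step]

lemma F_pow (q m : ℕ) (n₂ : ℕ) :
    (Fideal k q m) ^ n₂
      = Ideal.span ((fun d => monomial d (1:k)) ''
          ({P 0 ((2*(q+m)+1)*n₂)} : Set (Fin 2 →₀ ℕ))) := by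
  unfold Fideal
  rw [Ideal.span_singleton_pow, ← pow_mul, Set.image_singleton]
  congr 1
  simp [P, X_pow_eq_monomial, mul_comm]

lemma E_shift (a n₁ n₂ : ℕ) :
    ({P 0 ((2*a+1)*n₂)} : Set (Fin 2 →₀ ℕ)) + E a n₁ 0 = E a n₁ n₂ := by
  ext d
  simp only [Set.mem_add, Set.mem_singleton_iff, E, Set.mem_setOf_eq]
  constructor
  · rintro ⟨g, rfl, t, ⟨i₁, i₂, i₃, hs, rfl⟩, rfl⟩
    exact ⟨i₁, i₂, i₃, hs, by rw [P_add]; congr 1 <;> ring⟩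
  · rintro ⟨i₁, i₂, i₃, hs, rfl⟩
    exact ⟨_, rfl, _, ⟨i₁, i₂, i₃, hs, rfl⟩, by rw [P_add]; congr 1 <;> ring⟩

lemma FJ_pow (q m : ℕ) (n₁ n₂ : ℕ) :
    (Fideal k q m) ^ n₂ * (Jideal k q m) ^ n₁
      = Ideal.span ((fun d => monomial d (1:k)) '' E (q+m) n₁ n₂) := by
  rw [F_pow, J_pow, span_monomial_mul, E_shift]

lemma I_le_span (q m n : ℕ) :
    Iideal k q m n ≤ Ideal.span ((fun d => monomial d (1:k)) '' S (q+m) n) := by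
  refine iSup_le fun c => iSup_le fun hc => ?_
  rw [FJ_pow]
  refine Ideal.span_mono (Set.image_mono ?_)
  rintro d ⟨i₁, i₂, i₃, hs, rfl⟩
  exact ⟨i₁, i₂, i₃, c.2, by omega, rfl⟩

lemma span_le_I (q m n : ℕ) :
    Ideal.span ((fun d => monomial d (1:k)) '' S (q+m) n) ≤ Iideal k q m n := by
  rw [Ideal.span_le]
  rintro x ⟨d, ⟨i₁, i₂, i₃, n₂, hs, rfl⟩, rfl⟩
  have hmem : monomial (P (2*i₁ + i₂) ((q+m)*i₂ + ((q+m)+1)*i₃ + (2*(q+m)+1)*n₂)) (1:k)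
      ∈ (Fideal k q m) ^ n₂ * (Jideal k q m) ^ (i₁ + i₂ + i₃) := by
    rw [FJ_pow]
    exact Ideal.subset_span ⟨_, ⟨i₁, i₂, i₃, rfl, rfl⟩, rfl⟩
  refine Submodule.mem_iSup_of_mem (⟨i₁ + i₂ + i₃, n₂⟩ : ℕ × ℕ) ?_
  exact Submodule.mem_iSup_of_mem (by simpa using hs) hmem

end St5

open St5 in
/-- For all `n ≥ 2`, `(Iₙ : x₃^{q+m}) ⊆ I_{n-1}`. -/
theorem statement5 (k : Type*) [Field k] (q m : ℕ) (hq : 1 ≤ q) (hm : 1 ≤ m) :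
    ∀ n : ℕ, 2 ≤ n →
      Submodule.colon (Iideal k q m n)
          (Ideal.span {(X 1 : MvPolynomial (Fin 2) k) ^ (q+m)})
        ≤ Iideal k q m (n-1) := by
  intro n hn f hf
  have hmem : f * X 1 ^ (q+m) ∈ Iideal k q m n := Ideal.mem_colon_span_singleton.mp hf
  have h1 : f * X 1 ^ (q+m) ∈ Ideal.span ((fun d => monomial d (1:k)) '' S (q+m) n) :=
    I_le_span q m n hmem
  have h2 := mem_ideal_span_monomial_image.mp h1
  refine span_le_I q m (n-1) ?_
  rw [mem_ideal_span_monomial_image]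
  intro d hd
  have hd' : d + Finsupp.single 1 (q+m) ∈ (f * X 1 ^ (q+m)).support := by
    rw [mem_support_iff, X_pow_eq_monomial, coeff_mul_monomial, mul_one]
    exact mem_support_iff.mp hd
  obtain ⟨s, ⟨i₁, i₂, i₃, n₂, hs, rfl⟩, hle⟩ := h2 _ hd'
  rw [P_le_iff] at hle
  have hds0 : ((d + Finsupp.single 1 (q+m) : Fin 2 →₀ ℕ)) 0 = d 0 := by
    simp [Finsupp.add_apply, Finsupp.single_apply]
  have hds1 : ((d + Finsupp.single 1 (q+m) : Fin 2 →₀ ℕ)) 1 = d 1 + (q+m) := by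
    simp [Finsupp.add_apply, Finsupp.single_apply]
  rw [hds0, hds1] at hle
  obtain ⟨hu, hv⟩ := hle
  rcases n₂ with _ | m₂
  · rcases i₃ with _ | j₃
    · rcases i₂ with _ | j₂
      · -- all of i₂, i₃, n₂ are zero; i₁ = n ≥ 2
        refine ⟨_, ⟨i₁ - 1, 0, 0, 0, by omega, rfl⟩, ?_⟩
        rw [P_le_iff]
        constructor
        · simp only [mul_zero, add_zero] at hu ⊢
          omega
        · simp
      · -- i₂ = j₂ + 1 > 0
        refine ⟨_, ⟨i₁, j₂, 0, 0, by omega, rfl⟩, ?_⟩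
        rw [P_le_iff]
        refine ⟨by omega, ?_⟩
        have hkey : (q+m)*j₂ + ((q+m)+1)*0 + (2*(q+m)+1)*0 + (q+m)
            = (q+m)*(j₂+1) + ((q+m)+1)*0 + (2*(q+m)+1)*0 := by ring
        have hv2 := hv
        rw [← hkey] at hv2
        omega
    · -- i₃ = j₃ + 1 > 0
      refine ⟨_, ⟨i₁, i₂, j₃, 0, by omega, rfl⟩, ?_⟩
      rw [P_le_iff]
      refine ⟨by omega, ?_⟩
      have hkey : (q+m)*i₂ + ((q+m)+1)*j₃ + (2*(q+m)+1)*0 + ((q+m)+1)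
          = (q+m)*i₂ + ((q+m)+1)*(j₃+1) + (2*(q+m)+1)*0 := by ring
      have hv2 := hv
      rw [← hkey] at hv2
      omega
  · -- n₂ = m₂ + 1 > 0
    refine ⟨_, ⟨i₁, i₂, i₃ + 1, m₂, by omega, rfl⟩, ?_⟩
    rw [P_le_iff]
    refine ⟨by omega, ?_⟩
    have hkey : (q+m)*i₂ + ((q+m)+1)*(i₃+1) + (2*(q+m)+1)*m₂ + (q+m)
        = (q+m)*i₂ + ((q+m)+1)*i₃ + (2*(q+m)+1)*(m₂+1) := by ring
    have hv2 := hv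
    rw [← hkey] at hv2
    omega
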